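/- For every n×k integer matrix B, the columns of B form part of a basis of ℤⁿ (i.e., there exists a ℤ-basis of ℤⁿ containing all k columns of B) if and only if the n rows of B generate ℤᵏ as an abelian group. -/

import Mathlib

open Matrix

/-- From a left inverse `C * B = 1`, build a basis of `ℤⁿ` containing the columns of `B`. -/
theorem stmt3_aux (n k : ℕ) (B : Matrix (Fin n) (Fin k) ℤ)
    (C : Matrix (Fin k) (Fin n) ℤ) (hCB : C * B = 1) :
    ∃ (b : Module.Basis (Fin n) ℤ (Fin n → ℤ)) (f : Fin k → Fin n),
        Function.Injective f ∧ ∀ j, b (f j) = fun i => B i j := by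
  set K := LinearMap.ker (Matrix.mulVecLin C) with hK
  have hmem : ∀ x : Fin n → ℤ, x - B.mulVec (C.mulVec x) ∈ K := by
    intro x
    simp only [hK, LinearMap.mem_ker, mulVecLin_apply, mulVec_sub, mulVec_mulVec,
      ← Matrix.mul_assoc, hCB, Matrix.one_mul, one_mulVec, sub_self]
  let φ : ((Fin k → ℤ) × K) →ₗ[ℤ] (Fin n → ℤ) :=
    LinearMap.coprod (Matrix.mulVecLin B) K.subtype
  let ψ : (Fin n → ℤ) →ₗ[ℤ] ((Fin k → ℤ) × K) :=
    LinearMap.prod (Matrix.mulVecLin C)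
      ((LinearMap.id - (Matrix.mulVecLin B) ∘ₗ (Matrix.mulVecLin C)).codRestrict K
        (fun x => by simpa using hmem x))
  have h1 : φ ∘ₗ ψ = LinearMap.id := by
    apply LinearMap.ext; intro x
    show B.mulVec (C.mulVec x) + (x - B.mulVec (C.mulVec x)) = x
    abel
  have h2 : ψ ∘ₗ φ = LinearMap.id := by
    apply LinearMap.ext
    rintro ⟨y, z, hz⟩
    have hz' : C.mulVec z = 0 := hz
    have hy : C.mulVec (B.mulVec y + z) = y := by
      rw [mulVec_add, mulVec_mulVec, hCB, one_mulVec, hz', add_zero]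
    refine Prod.ext ?_ (Subtype.ext ?_)
    · exact hy
    · show (B.mulVec y + z) - B.mulVec (C.mulVec (B.mulVec y + z)) = z
      rw [hy]; abel
  let e : ((Fin k → ℤ) × K) ≃ₗ[ℤ] (Fin n → ℤ) := LinearEquiv.ofLinear φ ψ h1 h2
  let bK := Module.Free.chooseBasis ℤ K
  let ι := Module.Free.ChooseBasisIndex ℤ K
  have hcard : Fintype.card (Fin k ⊕ ι) = n := by
    have h1 : Module.finrank ℤ ((Fin k → ℤ) × K) = Module.finrank ℤ (Fin n → ℤ) :=
      e.finrank_eq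
    simp only [Module.finrank_prod, Module.finrank_pi, Fintype.card_fin] at h1
    rw [Fintype.card_sum, Fintype.card_fin,
      ← Module.finrank_eq_card_chooseBasisIndex ℤ K, h1]
  let g : (Fin k ⊕ ι) ≃ Fin n := Fintype.equivFinOfCardEq hcard
  let b : Module.Basis (Fin n) ℤ (Fin n → ℤ) := (((Pi.basisFun ℤ (Fin k)).prod bK).map e).reindex g
  refine ⟨b, fun j => g (Sum.inl j), fun a b hab => by simpa using g.injective hab, fun j => ?_⟩
  have : b (g (Sum.inl j)) = e ((Pi.basisFun ℤ (Fin k)) j, 0) := by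
    simp [b, Module.Basis.reindex_apply, Module.Basis.prod_apply]
  rw [this]
  show φ _ = _
  simp only [φ, LinearMap.coprod_apply, mulVecLin_apply, Submodule.coe_subtype,
    ZeroMemClass.coe_zero, add_zero, Pi.basisFun_apply]
  ext i
  simp

theorem stmt_3 (n k : ℕ) (B : Matrix (Fin n) (Fin k) ℤ) :
    (∃ (b : Module.Basis (Fin n) ℤ (Fin n → ℤ)) (f : Fin k → Fin n),
        Function.Injective f ∧ ∀ j, b (f j) = fun i => B i j) ↔
      Submodule.span ℤ (Set.range fun i : Fin n => (B i : Fin k → ℤ)) = ⊤ := by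
  rw [show (Set.range fun i : Fin n => (B i : Fin k → ℤ)) = Set.range B.row from rfl,
    ← range_vecMulLinear, LinearMap.range_eq_top]
  constructor
  · rintro ⟨b, f, hf, hbf⟩
    intro y
    set C : Matrix (Fin k) (Fin n) ℤ := Matrix.of fun j i => b.coord (f j) (Pi.single i 1) with hC
    have hCB : C * B = 1 := by
      ext j j'
      have hcol : (fun i => B i j') = b (f j') := (hbf j').symm
      have : (C * B) j j' = b.coord (f j) (b (f j')) := by
        rw [← hcol]
        simp only [Matrix.mul_apply, hC, Matrix.of_apply]
        rw [show (fun i => B i j') = ∑ i, B i j' • Pi.single i (1:ℤ) from ?_]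
        · rw [map_sum]
          congr 1
          ext i
          rw [_root_.map_smul, smul_eq_mul]
          ring
        · ext i'
          simp [Pi.single_apply, Finset.sum_ite_eq']
      rw [this, Module.Basis.coord_apply, Module.Basis.repr_self]
      by_cases h : j' = j
      · subst h; simp
      · have : f j' ≠ f j := fun hh => h (hf hh)
        simp [Finsupp.single_apply, this, Matrix.one_apply, h, Ne.symm h]
    exact ⟨Matrix.vecMul y C, by rw [Matrix.vecMulLinear_apply, Matrix.vecMul_vecMul, hCB,
      Matrix.vecMul_one]⟩
  · intro hsurj
    choose c hc using fun j : Fin k => hsurj (Pi.single j 1)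
    apply stmt3_aux n k B (Matrix.of c)
    ext j j'
    have := congr_fun (hc j) j'
    rw [Matrix.vecMulLinear_apply] at this
    simp only [Matrix.mul_apply, Matrix.of_apply]
    rw [show ∑ i, c j i * B i j' = (Matrix.vecMul (c j) B) j' from rfl, this]
    rcases eq_or_ne j j' with h | h
    · subst h; simp
    · simp [Pi.single_apply, Matrix.one_apply, h, Ne.symm h]
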